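/- Let M ∈ ℝ^{I×I} be a matrix with positive diagonal entries, nonpositive off-diagonal entries, and strict diagonal dominance by columns (M_{jj} > Σ_{i≠j} |M_{ij}| for every j). Then M is invertible and every entry of M^{-1} is nonnegative. -/

import Mathlib

/-- A matrix with positive diagonal, nonpositive off-diagonal entries, strictly diagonally
dominant by columns, is invertible with entrywise nonnegative inverse. -/
theorem diag_dominant_M_matrix_inverse_nonneg
    (I : ℕ) (M : Matrix (Fin I) (Fin I) ℝ)
    (hdiag : ∀ i, 0 < M i i)
    (hoff : ∀ i j, i ≠ j → M i j ≤ 0)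
    (hdom : ∀ j, ∑ i ∈ Finset.univ.erase j, |M i j| < M j j) :
    IsUnit M ∧ ∀ i j, 0 ≤ M⁻¹ i j := by
  have hdet : M.det ≠ 0 := by
    apply det_ne_zero_of_sum_col_lt_diag
    intro k
    calc ∑ i ∈ Finset.univ.erase k, ‖M i k‖ = ∑ i ∈ Finset.univ.erase k, |M i k| := rfl
    _ < M k k := hdom k
    _ ≤ ‖M k k‖ := le_abs_self _
  have hunit : IsUnit M := by
    rw [Matrix.isUnit_iff_isUnit_det]
    exact isUnit_iff_ne_zero.mpr hdet
  refine ⟨hunit, fun i j => ?_⟩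
  set x : Fin I → ℝ := fun k => M⁻¹ i k with hx
  have hb : ∀ j, 0 ≤ ∑ k, x k * M k j := by
    intro j
    have := Matrix.nonsing_inv_mul M (isUnit_iff_ne_zero.mpr hdet)
    have h1 : (M⁻¹ * M) i j = (1 : Matrix (Fin I) (Fin I) ℝ) i j := by rw [this]
    rw [Matrix.mul_apply] at h1
    rw [show (∑ k, x k * M k j) = (∑ k, M⁻¹ i k * M k j) from rfl, h1]
    by_cases h : i = j <;> simp [Matrix.one_apply, h]
  by_contra hneg
  push_neg at hneg
  -- pick minimizer of x
  obtain ⟨k, -, hk⟩ := Finset.exists_min_image (Finset.univ : Finset (Fin I)) x ⟨j, Finset.mem_univ j⟩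
  have hxk : x k < 0 := lt_of_le_of_lt (hk j (Finset.mem_univ j)) hneg
  have hsum := hb k
  have hsplit : ∑ t, x t * M t k = x k * M k k + ∑ t ∈ Finset.univ.erase k, x t * M t k := by
    rw [← Finset.add_sum_erase _ _ (Finset.mem_univ k)]
  have hle : ∑ t ∈ Finset.univ.erase k, x t * M t k ≤ ∑ t ∈ Finset.univ.erase k, x k * M t k := by
    apply Finset.sum_le_sum
    intro t ht
    have htk : t ≠ k := Finset.ne_of_mem_erase ht
    have : M t k ≤ 0 := hoff t k htk
    nlinarith [hk t (Finset.mem_univ t)]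
  have habs : ∑ t ∈ Finset.univ.erase k, M t k = -∑ t ∈ Finset.univ.erase k, |M t k| := by
    rw [← Finset.sum_neg_distrib]
    apply Finset.sum_congr rfl
    intro t ht
    rw [abs_of_nonpos (hoff t k (Finset.ne_of_mem_erase ht))]
    ring
  have hpos : 0 < M k k + ∑ t ∈ Finset.univ.erase k, M t k := by
    rw [habs]; linarith [hdom k]
  have : x k * M k k + ∑ t ∈ Finset.univ.erase k, x k * M t k
      = x k * (M k k + ∑ t ∈ Finset.univ.erase k, M t k) := by
    rw [← Finset.mul_sum]; ring
  nlinarith
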